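/- For every positive integer n ≥ 2, there exists a function f : ℤ/nℤ → ℤ/nℤ that agrees with any given endomorphism of ℤ/nℤ on at most one element; combined with the existence of a universal element in ℤ/nℤ, the minimum endomorphic approximability of ℤ/nℤ is exactly 1. -/

import Mathlib

/-- The endomorphic approximability of a function `f` on `ℤ/nℤ`: the maximum over
endomorphisms `x ↦ a * x` of the number of points of agreement. -/
noncomputable def enappZMod (n : ℕ) (f : ZMod n → ZMod n) : ℕ :=
  sSup {k | ∃ a : ZMod n, k = Set.ncard {x | f x = a * x}}

/-- For `n ≥ 2`, some function on `ℤ/nℤ` agrees with each endomorphism on at most one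
element, and the minimum endomorphic approximability of `ℤ/nℤ` is exactly 1. -/
theorem stmt_13 (n : ℕ) (hn : 2 ≤ n) :
    (∃ f : ZMod n → ZMod n, ∀ a : ZMod n, Set.ncard {x | f x = a * x} ≤ 1) ∧
    sInf (Set.range (enappZMod n)) = 1 := by
  haveI : NeZero n := ⟨by omega⟩
  haveI : Fintype (ZMod n) := ZMod.fintype n
  classical
  set f : ZMod n → ZMod n := fun x => if IsUnit x then x * x else 1 with hf
  -- the agreement set of f with a is a subset of {a}
  have hsub : ∀ a : ZMod n, {x | f x = a * x} ⊆ {a} := by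
    intro a x hx
    simp only [Set.mem_setOf_eq, hf] at hx
    by_cases hu : IsUnit x
    · rw [if_pos hu] at hx
      obtain ⟨u, rfl⟩ := hu
      have := congrArg (· * (↑u⁻¹ : ZMod n)) hx
      simp only [mul_assoc, Units.mul_inv, mul_one] at this
      simp [this]
    · rw [if_neg hu] at hx
      exact absurd (IsUnit.of_mul_eq_one (a := x) a (by rw [mul_comm]; exact hx.symm)) hu
  have hle1 : ∀ a : ZMod n, Set.ncard {x | f x = a * x} ≤ 1 := by
    intro a
    calc Set.ncard {x | f x = a * x} ≤ Set.ncard {a} :=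
          Set.ncard_le_ncard (hsub a) (Set.finite_singleton a)
      _ = 1 := Set.ncard_singleton a
  -- the agreement set with a = 1 is exactly {1}
  have hone : {x : ZMod n | f x = 1 * x} = {1} := by
    apply Set.Subset.antisymm (hsub 1)
    intro x hx
    rw [Set.mem_singleton_iff] at hx
    subst hx
    simp [hf]
  have hfval : enappZMod n f = 1 := by
    unfold enappZMod
    apply le_antisymm
    · refine csSup_le ⟨1, 1, by rw [hone, Set.ncard_singleton]⟩ ?_
      rintro k ⟨a, rfl⟩
      exact hle1 a
    · have hbdd : BddAbove {k | ∃ a : ZMod n, k = Set.ncard {x | f x = a * x}} :=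
        ⟨1, by rintro k ⟨a, rfl⟩; exact hle1 a⟩
      exact le_csSup hbdd ⟨1, by rw [hone, Set.ncard_singleton]⟩
  refine ⟨⟨f, hle1⟩, ?_⟩
  apply le_antisymm
  · calc sInf (Set.range (enappZMod n)) ≤ enappZMod n f := csInf_le (OrderBot.bddBelow _) ⟨f, rfl⟩
      _ = 1 := hfval
  · refine le_csInf ⟨1, f, hfval⟩ ?_
    rintro k ⟨g, rfl⟩
    -- any g agrees with a = g 1 at x = 1
    have hmem : (1 : ZMod n) ∈ {x | g x = (g 1) * x} := by simp
    have hfin : {x : ZMod n | g x = (g 1) * x}.Finite := Set.toFinite _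
    have hpos : 1 ≤ Set.ncard {x : ZMod n | g x = (g 1) * x} :=
      (Set.ncard_pos hfin).mpr ⟨1, hmem⟩
    calc (1 : ℕ) ≤ Set.ncard {x : ZMod n | g x = (g 1) * x} := hpos
      _ ≤ sSup {k | ∃ a : ZMod n, k = Set.ncard {x | g x = a * x}} := by
          have hbdd : BddAbove {k | ∃ a : ZMod n, k = Set.ncard {x | g x = a * x}} := by
            refine ⟨Nat.card (ZMod n), ?_⟩
            rintro k ⟨a, rfl⟩
            calc Set.ncard {x | g x = a * x} ≤ Set.ncard (Set.univ : Set (ZMod n)) :=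
                  Set.ncard_le_ncard (Set.subset_univ _) Set.finite_univ
              _ = Nat.card (ZMod n) := Set.ncard_univ _
          exact le_csSup hbdd ⟨g 1, rfl⟩
      _ = enappZMod n g := rfl
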